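/- Let λ, μ, ν > 0, θ ∈ (0, π/2), α, β ∈ ℝ, and set D = μ²·sin²(α+β) + ν²·cos²(α+β). Define E_g = cos²θ·(λ²cos²θ + sin²θ·D), F_g = cos²θ·sin²θ·(λ² − D), G_g = sin²θ·(λ²sin²θ + cos²θ·D), and E_h = cos²θ·(−λ²cos²θ + sin²θ·D), F_h = −cos²θ·sin²θ·(λ² + D), G_h = sin²θ·(−λ²sin²θ + cos²θ·D). Then E_g·G_g − F_g² = λ²·cos²θ·sin²θ·D > 0, E_h·G_h − F_h² = −λ²·cos²θ·sin²θ·D ≠ 0, and (G_h + F_h)/(E_h·G_h − F_h²) = (G_g + F_g)/(E_g·G_g − F_g²), (E_h + F_h)/(E_h·G_h − F_h²) = (E_g + F_g)/(E_g·G_g − F_g²), (G_h − E_h)/(E_h·G_h − F_h²) = (G_g − E_g)/(E_g·G_g − F_g²). -/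
import Mathlib


open Real Set

theorem first_fundamental_form_identities_sphere
    (l m n : ℝ) (hl : 0 < l) (hm : 0 < m) (hn : 0 < n)
    (θ : ℝ) (hθ : θ ∈ Ioo 0 (π / 2)) (α β : ℝ)
    (D : ℝ) (hD : D = m ^ 2 * Real.sin (α + β) ^ 2 + n ^ 2 * Real.cos (α + β) ^ 2)
    (Eg Fg Gg Eh Fh Gh : ℝ)
    (hEg : Eg = Real.cos θ ^ 2 * (l ^ 2 * Real.cos θ ^ 2 + Real.sin θ ^ 2 * D))
    (hFg : Fg = Real.cos θ ^ 2 * Real.sin θ ^ 2 * (l ^ 2 - D))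
    (hGg : Gg = Real.sin θ ^ 2 * (l ^ 2 * Real.sin θ ^ 2 + Real.cos θ ^ 2 * D))
    (hEh : Eh = Real.cos θ ^ 2 * (-(l ^ 2) * Real.cos θ ^ 2 + Real.sin θ ^ 2 * D))
    (hFh : Fh = -(Real.cos θ ^ 2 * Real.sin θ ^ 2 * (l ^ 2 + D)))
    (hGh : Gh = Real.sin θ ^ 2 * (-(l ^ 2) * Real.sin θ ^ 2 + Real.cos θ ^ 2 * D)) :
    (Eg * Gg - Fg ^ 2 = l ^ 2 * Real.cos θ ^ 2 * Real.sin θ ^ 2 * D ∧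
      0 < Eg * Gg - Fg ^ 2) ∧
    (Eh * Gh - Fh ^ 2 = -(l ^ 2 * Real.cos θ ^ 2 * Real.sin θ ^ 2 * D) ∧
      Eh * Gh - Fh ^ 2 ≠ 0) ∧
    (Gh + Fh) / (Eh * Gh - Fh ^ 2) = (Gg + Fg) / (Eg * Gg - Fg ^ 2) ∧
    (Eh + Fh) / (Eh * Gh - Fh ^ 2) = (Eg + Fg) / (Eg * Gg - Fg ^ 2) ∧
    (Gh - Eh) / (Eh * Gh - Fh ^ 2) = (Gg - Eg) / (Eg * Gg - Fg ^ 2) := by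

  have pyth := Real.sin_sq_add_cos_sq θ
  have hs : 0 < Real.sin θ := Real.sin_pos_of_pos_of_lt_pi hθ.1 (lt_trans hθ.2 (by linarith [Real.pi_pos]))
  have hc : 0 < Real.cos θ := Real.cos_pos_of_mem_Ioo ⟨by linarith [hθ.1, Real.pi_pos], hθ.2⟩
  have hDpos : 0 < D := by
    rw [hD]
    have pyth2 := Real.sin_sq_add_cos_sq (α + β)
    rcases le_total (Real.sin (α + β) ^ 2) (1/2) with h | h
    · nlinarith [sq_nonneg (m * Real.sin (α + β)), pow_pos hn 2]
    · nlinarith [sq_nonneg (n * Real.cos (α + β)), pow_pos hm 2]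
  have hX : 0 < l ^ 2 * Real.cos θ ^ 2 * Real.sin θ ^ 2 * D := by positivity
  have hdg : Eg * Gg - Fg ^ 2 = l ^ 2 * Real.cos θ ^ 2 * Real.sin θ ^ 2 * D := by
    subst hEg hFg hGg
    linear_combination (Real.cos θ ^ 2 * Real.sin θ ^ 2 * l ^ 2 * D * (Real.sin θ ^ 2 + Real.cos θ ^ 2 + 1)) * pyth
  have hdh : Eh * Gh - Fh ^ 2 = -(l ^ 2 * Real.cos θ ^ 2 * Real.sin θ ^ 2 * D) := by
    subst hEh hFh hGh
    linear_combination (-(Real.cos θ ^ 2 * Real.sin θ ^ 2 * l ^ 2 * D) * (Real.sin θ ^ 2 + Real.cos θ ^ 2 + 1)) * pyth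
  have hXne : l ^ 2 * Real.cos θ ^ 2 * Real.sin θ ^ 2 * D ≠ 0 := ne_of_gt hX
  refine ⟨⟨hdg, by rw [hdg]; exact hX⟩, ⟨hdh, by rw [hdh]; simpa using hXne⟩, ?_, ?_, ?_⟩
  · rw [hdg, hdh]
    have h1 : Gh + Fh = -(Gg + Fg) := by subst hEh hFh hGh hGg hFg; ring
    rw [h1, neg_div_neg_eq]
  · rw [hdg, hdh]
    have h1 : Eh + Fh = -(Eg + Fg) := by subst hEh hFh hEg hFg; ring
    rw [h1, neg_div_neg_eq]
  · rw [hdg, hdh]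
    have h1 : Gh - Eh = -(Gg - Eg) := by subst hEh hGh hEg hGg; ring
    rw [h1, neg_div_neg_eq]
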